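/- The polynomial P₁(x,y,z) = (xyz − z + y + x)² ∈ ℝ[x,y,z] is extremal in Q_P(2,2,2): whenever P₁ = g + h with g, h ∈ Q_P(2,2,2), there exists a real constant c ≥ 0 with g = c·P₁. -/

import Mathlib

open MvPolynomial

noncomputable section

/-- `Q_P(2,2,2)`: real polynomials in `x,y,z` expressible as finite sums `∑ gⱼ²` with each
`gⱼ` of degree at most `1` in each of the variables. -/
def QP222 : Set (MvPolynomial (Fin 3) ℝ) :=
  { p | ∃ (r : ℕ) (g : Fin r → MvPolynomial (Fin 3) ℝ),
      (∀ j, (g j).degreeOf 0 ≤ 1 ∧ (g j).degreeOf 1 ≤ 1 ∧ (g j).degreeOf 2 ≤ 1) ∧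
      p = ∑ j, (g j) ^ 2 }

section Aux
open Finsupp

def ee (i j k : ℕ) : Fin 3 →₀ ℕ := single 0 i + single 1 j + single 2 k

lemma ee0 (i j k : ℕ) : ee i j k 0 = i := by simp [ee, Finsupp.single_apply]
lemma ee1 (i j k : ℕ) : ee i j k 1 = j := by simp [ee, Finsupp.single_apply]
lemma ee2 (i j k : ℕ) : ee i j k 2 = k := by simp [ee, Finsupp.single_apply]

lemma mono_ee (i j k : ℕ) (a : ℝ) :
    (monomial (ee i j k) a : MvPolynomial (Fin 3) ℝ) = C a * X 0 ^ i * X 1 ^ j * X 2 ^ k := by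
  simp [ee, X_pow_eq_monomial, monomial_mul, C_mul_monomial, add_assoc]

lemma ee_injEq {i j k i' j' k' : ℕ} : ee i j k = ee i' j' k' ↔ i = i' ∧ j = j' ∧ k = k' := by
  constructor
  · intro h
    exact ⟨by rw [← ee0 i j k, h, ee0], by rw [← ee1 i j k, h, ee1], by rw [← ee2 i j k, h, ee2]⟩
  · rintro ⟨rfl, rfl, rfl⟩; rfl

set_option maxHeartbeats 2000000 in
lemma decomp (g : MvPolynomial (Fin 3) ℝ)
    (h0 : g.degreeOf 0 ≤ 1) (h1 : g.degreeOf 1 ≤ 1) (h2 : g.degreeOf 2 ≤ 1) :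
    g = C (coeff (ee 0 0 0) g) + C (coeff (ee 1 0 0) g) * X 0 + C (coeff (ee 0 1 0) g) * X 1
      + C (coeff (ee 0 0 1) g) * X 2 + C (coeff (ee 1 1 0) g) * X 0 * X 1
      + C (coeff (ee 1 0 1) g) * X 0 * X 2 + C (coeff (ee 0 1 1) g) * X 1 * X 2
      + C (coeff (ee 1 1 1) g) * X 0 * X 1 * X 2 := by
  classical
  have hsub : g.support ⊆ ({ee 0 0 0, ee 1 0 0, ee 0 1 0, ee 0 0 1, ee 1 1 0, ee 1 0 1,
      ee 0 1 1, ee 1 1 1} : Finset (Fin 3 →₀ ℕ)) := by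
    intro m hm
    have hm0 : m 0 ≤ 1 := degreeOf_le_iff.mp h0 m hm
    have hm1 : m 1 ≤ 1 := degreeOf_le_iff.mp h1 m hm
    have hm2 : m 2 ≤ 1 := degreeOf_le_iff.mp h2 m hm
    have hme : m = ee (m 0) (m 1) (m 2) := by
      ext i
      fin_cases i <;> simp [ee, Finsupp.single_apply]
    interval_cases h0' : (m 0) <;> interval_cases h1' : (m 1) <;> interval_cases h2' : (m 2) <;>
      rw [hme] <;> simp only [Finset.mem_insert, Finset.mem_singleton] <;> tauto
  have := (Finset.sum_subset hsub ?_).symm.trans (as_sum g).symm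
  · conv_lhs => rw [← this]
    norm_num [Finset.sum_insert, Finset.mem_insert, Finset.mem_singleton, ee_injEq,
      Finset.sum_singleton, mono_ee, not_or]
    ring
  · intro m _ hm
    rw [MvPolynomial.notMem_support_iff.mp hm, monomial_zero]

abbrev q3 : MvPolynomial (Fin 3) ℝ := X 0 * X 1 * X 2 - X 2 + X 1 + X 0

set_option maxHeartbeats 1000000 in
lemma key (g : MvPolynomial (Fin 3) ℝ)
    (h0 : g.degreeOf 0 ≤ 1) (h1 : g.degreeOf 1 ≤ 1) (h2 : g.degreeOf 2 ≤ 1)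
    (v0 : eval ![(0:ℝ),0,0] g = 0) (v1 : eval ![(1:ℝ),0,1] g = 0)
    (v2 : eval ![(0:ℝ),1,1] g = 0) (v3 : eval ![(2:ℝ),0,2] g = 0)
    (v4 : eval ![(0:ℝ),2,2] g = 0) (v5 : eval ![(1:ℝ),2,-3] g = 0)
    (v6 : eval ![(3:ℝ),1,-2] g = 0) :
    ∃ c : ℝ, g = C c * q3 := by
  have hd := decomp g h0 h1 h2
  set a := coeff (ee 0 0 0) g
  set b := coeff (ee 1 0 0) g
  set c := coeff (ee 0 1 0) g
  set d := coeff (ee 0 0 1) g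
  set e := coeff (ee 1 1 0) g
  set f := coeff (ee 1 0 1) g
  set k := coeff (ee 0 1 1) g
  set l := coeff (ee 1 1 1) g
  rw [hd] at v0 v1 v2 v3 v4 v5 v6
  simp only [map_add, map_mul, eval_C, eval_X, Matrix.cons_val_zero, Matrix.cons_val_one,
    Matrix.head_cons, Matrix.cons_val_two, Matrix.tail_cons] at v0 v1 v2 v3 v4 v5 v6
  refine ⟨l, ?_⟩
  rw [hd]
  have ha : a = 0 := by linarith
  have hf : f = 0 := by linarith
  have hk : k = 0 := by linarith
  have hb : b = l := by linarith
  have hc : c = l := by linarith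
  have hdl : d = -l := by linarith
  have he : e = 0 := by linarith
  rw [ha, hf, hk, hb, hc, hdl, he]
  simp only [map_zero, map_neg]
  ring

end Aux

/-- Proposition 6 (part): `P₁(x,y,z) = (xyz − z + y + x)²` is extremal in `Q_P(2,2,2)`. -/
theorem P1_extremal_in_QP (P₁ : MvPolynomial (Fin 3) ℝ)
    (hP₁ : P₁ = (X 0 * X 1 * X 2 - X 2 + X 1 + X 0) ^ 2) :
    ∀ g h : MvPolynomial (Fin 3) ℝ, g ∈ QP222 → h ∈ QP222 → P₁ = g + h →
      ∃ c : ℝ, 0 ≤ c ∧ g = C c * P₁ := by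
  intro g h hg hh hsum
  obtain ⟨r, gs, hdeg, rfl⟩ := hg
  obtain ⟨s, hs, hdeg', rfl⟩ := hh
  have hq : ∀ p : Fin 3 → ℝ, eval p (q3 : MvPolynomial (Fin 3) ℝ) = 0 → ∀ j, eval p (gs j) = 0 := by
    intro p hp j
    have hP : eval p P₁ = 0 := by rw [hP₁]; simp only [map_pow]; rw [hp]; ring
    rw [hsum] at hP
    simp only [map_add, map_sum, map_pow] at hP
    have h1 : (0:ℝ) ≤ ∑ j, (eval p (gs j))^2 := Finset.sum_nonneg fun _ _ => sq_nonneg _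
    have h2 : (0:ℝ) ≤ ∑ k, (eval p (hs k))^2 := Finset.sum_nonneg fun _ _ => sq_nonneg _
    have h3 : ∑ j, (eval p (gs j))^2 = 0 := by linarith
    have h4 := (Finset.sum_eq_zero_iff_of_nonneg (fun i _ => sq_nonneg _)).mp h3 j
      (Finset.mem_univ j)
    exact pow_eq_zero_iff two_ne_zero |>.mp h4
  have hC : ∀ j, ∃ c, gs j = C c * q3 := by
    intro j
    refine key (gs j) (hdeg j).1 (hdeg j).2.1 (hdeg j).2.2 ?_ ?_ ?_ ?_ ?_ ?_ ?_ <;>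
      refine hq _ (by norm_num [Matrix.cons_val_two, Matrix.tail_cons, Matrix.head_cons]) j
  choose cc hcc using hC
  refine ⟨∑ j, (cc j)^2, Finset.sum_nonneg fun _ _ => sq_nonneg _, ?_⟩
  rw [hP₁]
  calc ∑ j, (gs j)^2 = ∑ j, C ((cc j)^2) * q3^2 := by
        refine Finset.sum_congr rfl fun j _ => ?_
        rw [hcc j, mul_pow, ← map_pow]
    _ = C (∑ j, (cc j)^2) * q3^2 := by rw [← Finset.sum_mul, ← map_sum]
    _ = C (∑ j, (cc j)^2) * (X 0 * X 1 * X 2 - X 2 + X 1 + X 0)^2 := rfl
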